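/- Let G₁ and G₂ be arbitrary groups and H ≤ G₁ × G₂ a subgroup. Then there exist connected simple graphs Γ₁ and Γ₂ and a graph homomorphism φ : Γ₁ → Γ₂ such that Aut(Γ₁) ≅ G₁, Aut(Γ₂) ≅ G₂ and Aut(φ) ≅ H. -/

import Mathlib

/-- The automorphism group of a binary relational system `R` over a label set `I`,
as a subgroup of the permutations of the vertex set. -/
def relAut {I V : Type*} (R : I → V → V → Prop) : Subgroup (Equiv.Perm V) where
  carrier := {e | ∀ i v w, R i v w ↔ R i (e v) (e w)}
  one_mem' := by intro i v w; simp
  mul_mem' := by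
    intro a b ha hb i v w
    simpa [Equiv.Perm.mul_apply] using (hb i v w).trans (ha i (b v) (b w))
  inv_mem' := by
    intro a ha i v w
    simpa [Equiv.Perm.coe_inv, Equiv.apply_symm_apply] using (ha i (a⁻¹ v) (a⁻¹ w)).symm

/-- The automorphism group of a morphism of binary relational systems, i.e. the subgroup of
`Aut(R₁) × Aut(R₂)` of pairs commuting with `f`. -/
def relArrowAut {I V₁ V₂ : Type*} (R₁ : I → V₁ → V₁ → Prop) (R₂ : I → V₂ → V₂ → Prop)
    (f : V₁ → V₂) : Subgroup (relAut R₁ × relAut R₂) where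
  carrier := {p | ∀ v, f ((p.1 : Equiv.Perm V₁) v) = (p.2 : Equiv.Perm V₂) (f v)}
  one_mem' := by intro v; simp
  mul_mem' := by
    intro a b ha hb v
    simp only [Prod.fst_mul, Prod.snd_mul, Subgroup.coe_mul, Equiv.Perm.mul_apply]
    rw [ha ((b.1 : Equiv.Perm V₁) v), hb v]
  inv_mem' := by
    intro a ha v
    simp only [Prod.fst_inv, Prod.snd_inv, Subgroup.coe_inv]
    have h := ha ((a.1 : Equiv.Perm V₁)⁻¹ v)
    simp only [Equiv.Perm.coe_inv, Equiv.apply_symm_apply] at h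
    rw [h, Equiv.Perm.eq_inv_iff_eq]; rfl

/-- The automorphism group of a simple graph, as a subgroup of the permutations of the
vertex set. -/
def graphAut {V : Type*} (G : SimpleGraph V) : Subgroup (Equiv.Perm V) where
  carrier := {e | ∀ v w, G.Adj v w ↔ G.Adj (e v) (e w)}
  one_mem' := by intro v w; simp
  mul_mem' := by
    intro a b ha hb v w
    simpa [Equiv.Perm.mul_apply] using (hb v w).trans (ha (b v) (b w))
  inv_mem' := by
    intro a ha v w
    simpa [Equiv.Perm.coe_inv, Equiv.apply_symm_apply] using (ha (a⁻¹ v) (a⁻¹ w)).symm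

/-- The automorphism group of a graph homomorphism, i.e. the subgroup of
`Aut(Γ₁) × Aut(Γ₂)` of pairs commuting with `f`. -/
def graphArrowAut {V₁ V₂ : Type*} (Γ₁ : SimpleGraph V₁) (Γ₂ : SimpleGraph V₂)
    (f : V₁ → V₂) : Subgroup (graphAut Γ₁ × graphAut Γ₂) where
  carrier := {p | ∀ v, f ((p.1 : Equiv.Perm V₁) v) = (p.2 : Equiv.Perm V₂) (f v)}
  one_mem' := by intro v; simp
  mul_mem' := by
    intro a b ha hb v
    simp only [Prod.fst_mul, Prod.snd_mul, Subgroup.coe_mul, Equiv.Perm.mul_apply]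
    rw [ha ((b.1 : Equiv.Perm V₁) v), hb v]
  inv_mem' := by
    intro a ha v
    simp only [Prod.fst_inv, Prod.snd_inv, Subgroup.coe_inv]
    have h := ha ((a.1 : Equiv.Perm V₁)⁻¹ v)
    simp only [Equiv.Perm.coe_inv, Equiv.apply_symm_apply] at h
    rw [h, Equiv.Perm.eq_inv_iff_eq]; rfl

namespace AR
universe u v

inductive Tag3 : Type | x | y | z
deriving DecidableEq

/-- arcs of a digraph -/
abbrev Arc {W : Type u} (A : W → W → Prop) : Type u := {c : W × W // A c.1 c.2}

/-- vertex set of the graph replacing a digraph -/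
abbrev Omega {W : Type u} (A : W → W → Prop) : Type u := W ⊕ (Arc A × Tag3)

variable {W : Type u} (A : W → W → Prop)

inductive GR : Omega A → Omega A → Prop
  | ux (e : Arc A) : GR (.inl e.1.1) (.inr (e, .x))
  | xy (e : Arc A) : GR (.inr (e, .x)) (.inr (e, .y))
  | yv (e : Arc A) : GR (.inr (e, .y)) (.inl e.1.2)
  | xz (e : Arc A) : GR (.inr (e, .x)) (.inr (e, .z))

def Gr : SimpleGraph (Omega A) where
  Adj u w := GR A u w ∨ GR A w u
  symm := ⟨fun u w h => h.symm⟩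
  loopless := ⟨by rintro v (h | h) <;> cases h⟩

lemma gr_adj {u w : Omega A} : (Gr A).Adj u w ↔ (GR A u w ∨ GR A w u) := Iff.rfl

/-- neighbourhood characterisations -/
lemma adj_z {a : Arc A} {w : Omega A} :
    (Gr A).Adj (.inr (a, .z)) w ↔ w = .inr (a, .x) := by
  constructor
  · rintro (h | h) <;> cases h; rfl
  · rintro rfl; exact Or.inr (GR.xz a)

lemma adj_y {a : Arc A} {w : Omega A} :
    (Gr A).Adj (.inr (a, .y)) w ↔ (w = .inr (a, .x) ∨ w = .inl a.1.2) := by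
  constructor
  · rintro (h | h) <;> cases h
    · exact Or.inr rfl
    · exact Or.inl rfl
  · rintro (rfl | rfl)
    · exact Or.inr (GR.xy a)
    · exact Or.inl (GR.yv a)

lemma adj_x {a : Arc A} {w : Omega A} :
    (Gr A).Adj (.inr (a, .x)) w ↔
      (w = .inl a.1.1 ∨ w = .inr (a, .y) ∨ w = .inr (a, .z)) := by
  constructor
  · rintro (h | h) <;> cases h
    · exact Or.inr (Or.inl rfl)
    · exact Or.inr (Or.inr rfl)
    · exact Or.inl rfl
  · rintro (rfl | rfl | rfl)
    · exact Or.inr (GR.ux a)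
    · exact Or.inl (GR.xy a)
    · exact Or.inl (GR.xz a)

lemma adj_w {u : W} {w : Omega A} :
    (Gr A).Adj (.inl u) w ↔
      ((∃ a : Arc A, a.1.1 = u ∧ w = .inr (a, .x)) ∨
       (∃ a : Arc A, a.1.2 = u ∧ w = .inr (a, .y))) := by
  constructor
  · rintro (h | h) <;> cases h
    · exact Or.inl ⟨_, rfl, rfl⟩
    · exact Or.inr ⟨_, rfl, rfl⟩
  · rintro (⟨a, rfl, rfl⟩ | ⟨a, rfl, rfl⟩)
    · exact Or.inl (GR.ux a)
    · exact Or.inr (GR.yv a)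

end AR

namespace AR
variable {W : Type u} {A : W → W → Prop}

lemma mem_relAut {I V : Type*} {R : I → V → V → Prop} {e : Equiv.Perm V} :
    e ∈ relAut R ↔ ∀ i v w, R i v w ↔ R i (e v) (e w) := Iff.rfl

lemma mem_graphAut {V : Type*} {G : SimpleGraph V} {e : Equiv.Perm V} :
    e ∈ graphAut G ↔ ∀ v w, G.Adj v w ↔ G.Adj (e v) (e w) := Iff.rfl

/-- the digraph neighbour relation -/
def NA (A : W → W → Prop) (u n : W) : Prop := A u n ∨ A n u

/-- `w` is a gadget vertex witnessing digraph-neighbour `n` of `u` -/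
def GadNbr (u n : W) (w : Omega A) : Prop :=
  (∃ h : A u n, w = .inr (⟨(u, n), h⟩, .x)) ∨ (∃ h : A n u, w = .inr (⟨(n, u), h⟩, .y))

lemma gadNbr_adj {u n : W} {w : Omega A} (h : GadNbr u n w) : (Gr A).Adj (.inl u) w := by
  rcases h with ⟨h, rfl⟩ | ⟨h, rfl⟩
  · exact Or.inl (GR.ux ⟨(u, n), h⟩)
  · exact Or.inr (GR.yv ⟨(n, u), h⟩)

lemma gadNbr_exists {u n : W} (h : NA A u n) : ∃ w : Omega A, GadNbr u n w := by
  rcases h with h | h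
  · exact ⟨_, Or.inl ⟨h, rfl⟩⟩
  · exact ⟨_, Or.inr ⟨h, rfl⟩⟩

lemma gadNbr_inj {u n n' : W} {w : Omega A} (h : GadNbr u n w) (h' : GadNbr u n' w) :
    n = n' := by
  rcases h with ⟨h, rfl⟩ | ⟨h, rfl⟩ <;> rcases h' with ⟨h', hw⟩ | ⟨h', hw⟩
  · exact congrArg Prod.snd (congrArg Subtype.val (congrArg Prod.fst (Sum.inr.inj hw)))
  · exact Tag3.noConfusion (congrArg Prod.snd (Sum.inr.inj hw))
  · exact Tag3.noConfusion (congrArg Prod.snd (Sum.inr.inj hw))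
  · exact congrArg Prod.fst (congrArg Subtype.val (congrArg Prod.fst (Sum.inr.inj hw)))

/-- degree-one vertices -/
def Deg1 (A : W → W → Prop) (v : Omega A) : Prop :=
  (∃ w, (Gr A).Adj v w) ∧ ∀ w w', (Gr A).Adj v w → (Gr A).Adj v w' → w = w'

/-- vertices with at least three distinct neighbours -/
def Nbr3 (A : W → W → Prop) (v : Omega A) : Prop :=
  ∃ w₁ w₂ w₃, (Gr A).Adj v w₁ ∧ (Gr A).Adj v w₂ ∧ (Gr A).Adj v w₃ ∧
    w₁ ≠ w₂ ∧ w₁ ≠ w₃ ∧ w₂ ≠ w₃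

/-- "original" vertices: three distinct neighbours and no pendant neighbour. -/
def Orig (A : W → W → Prop) (v : Omega A) : Prop :=
  Nbr3 A v ∧ ∀ w, (Gr A).Adj v w → ¬ Deg1 A w

section hdeg
variable (hdeg : ∀ u : W, ∃ n₁ n₂ n₃ : W,
    n₁ ≠ n₂ ∧ n₁ ≠ n₃ ∧ n₂ ≠ n₃ ∧ NA A u n₁ ∧ NA A u n₂ ∧ NA A u n₃)

include hdeg

lemma nbr3_inl (u : W) : Nbr3 A (.inl u) := by
  obtain ⟨n₁, n₂, n₃, h12, h13, h23, hn₁, hn₂, hn₃⟩ := hdeg u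
  obtain ⟨w₁, hw₁⟩ := gadNbr_exists hn₁
  obtain ⟨w₂, hw₂⟩ := gadNbr_exists hn₂
  obtain ⟨w₃, hw₃⟩ := gadNbr_exists hn₃
  exact ⟨w₁, w₂, w₃, gadNbr_adj hw₁, gadNbr_adj hw₂, gadNbr_adj hw₃,
    fun h => h12 (gadNbr_inj (h ▸ hw₁) hw₂),
    fun h => h13 (gadNbr_inj (h ▸ hw₁) hw₃),
    fun h => h23 (gadNbr_inj (h ▸ hw₂) hw₃)⟩

lemma not_deg1_inl (u : W) : ¬ Deg1 A (.inl u) := by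
  obtain ⟨w₁, w₂, _, h₁, h₂, _, h12, _, _⟩ := nbr3_inl hdeg u
  exact fun h => h12 (h.2 _ _ h₁ h₂)

omit hdeg

lemma not_deg1_x (a : Arc A) : ¬ Deg1 A (.inr (a, .x)) := by
  intro h
  have h1 : (Gr A).Adj (.inr (a, .x)) (.inl a.1.1) := (adj_x A).2 (Or.inl rfl)
  have h2 : (Gr A).Adj (.inr (a, .x)) (.inr (a, .y)) := (adj_x A).2 (Or.inr (Or.inl rfl))
  exact absurd (h.2 _ _ h1 h2) (by simp)

lemma not_deg1_y (a : Arc A) : ¬ Deg1 A (.inr (a, .y)) := by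
  intro h
  have h1 : (Gr A).Adj (.inr (a, .y)) (.inr (a, .x)) := (adj_y A).2 (Or.inl rfl)
  have h2 : (Gr A).Adj (.inr (a, .y)) (.inl a.1.2) := (adj_y A).2 (Or.inr rfl)
  exact absurd (h.2 _ _ h1 h2) (by simp)

lemma deg1_z (a : Arc A) : Deg1 A (.inr (a, .z)) := by
  refine ⟨⟨_, (adj_z A).2 rfl⟩, fun w w' hw hw' => ?_⟩
  rw [(adj_z A).1 hw, (adj_z A).1 hw']

include hdeg

lemma deg1_iff {v : Omega A} : Deg1 A v ↔ ∃ a : Arc A, v = .inr (a, .z) := by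
  constructor
  · intro h
    rcases v with u | ⟨a, t⟩
    · exact absurd h (not_deg1_inl hdeg u)
    · cases t
      · exact absurd h (not_deg1_x a)
      · exact absurd h (not_deg1_y a)
      · exact ⟨a, rfl⟩
  · rintro ⟨a, rfl⟩; exact deg1_z a

lemma orig_iff {v : Omega A} : Orig A v ↔ ∃ u : W, v = .inl u := by
  constructor
  · rintro ⟨h3, hnd⟩
    rcases v with u | ⟨a, t⟩
    · exact ⟨u, rfl⟩
    · cases t
      · exact absurd (deg1_z a) (hnd _ ((adj_x A).2 (Or.inr (Or.inr rfl))))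
      · obtain ⟨w₁, w₂, w₃, h₁, h₂, h₃, h12, h13, h23⟩ := h3
        rcases (adj_y A).1 h₁ with rfl | rfl <;> rcases (adj_y A).1 h₂ with rfl | rfl <;>
          rcases (adj_y A).1 h₃ with rfl | rfl <;> simp_all
      · obtain ⟨w₁, w₂, _, h₁, h₂, _, h12, _, _⟩ := h3
        rw [(adj_z A).1 h₁, (adj_z A).1 h₂] at h12
        exact absurd rfl h12
  · rintro ⟨u, rfl⟩
    refine ⟨nbr3_inl hdeg u, fun w hw => ?_⟩
    rcases (adj_w A).1 hw with ⟨a, _, rfl⟩ | ⟨a, _, rfl⟩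
    · exact not_deg1_x a
    · exact not_deg1_y a

end hdeg
end AR

namespace AR
variable {W : Type u} {A : W → W → Prop}

section lift
variable {W₂ : Type v} {A₂ : W₂ → W₂ → Prop}

/-- map on arcs induced by a digraph homomorphism -/
def Arc.map (ψ : W → W₂) (hψ : ∀ u v, A u v → A₂ (ψ u) (ψ v)) (a : Arc A) : Arc A₂ :=
  ⟨(ψ a.1.1, ψ a.1.2), hψ _ _ a.2⟩

/-- lift a digraph homomorphism to the replacement graphs -/
def liftMap (ψ : W → W₂) (hψ : ∀ u v, A u v → A₂ (ψ u) (ψ v)) : Omega A → Omega A₂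
  | .inl u => .inl (ψ u)
  | .inr (a, t) => .inr (Arc.map ψ hψ a, t)

lemma liftMap_gr (ψ : W → W₂) (hψ : ∀ u v, A u v → A₂ (ψ u) (ψ v)) {u w : Omega A}
    (h : GR A u w) : GR A₂ (liftMap ψ hψ u) (liftMap ψ hψ w) := by
  cases h with
  | ux e => exact GR.ux (Arc.map ψ hψ e)
  | xy e => exact GR.xy (Arc.map ψ hψ e)
  | yv e => exact GR.yv (Arc.map ψ hψ e)
  | xz e => exact GR.xz (Arc.map ψ hψ e)

/-- lift a digraph homomorphism to a graph homomorphism -/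
def liftHom (ψ : W → W₂) (hψ : ∀ u v, A u v → A₂ (ψ u) (ψ v)) : Gr A →g Gr A₂ where
  toFun := liftMap ψ hψ
  map_rel' := by
    rintro u w (h | h)
    · exact Or.inl (liftMap_gr ψ hψ h)
    · exact Or.inr (liftMap_gr ψ hψ h)

end lift

section perm

lemma relAut_fwd (σ : Equiv.Perm W) (hσ : σ ∈ relAut (fun _ : Unit => A)) (u v : W)
    (h : A u v) : A (σ u) (σ v) := (hσ () u v).1 h

lemma relAut_bwd (σ : Equiv.Perm W) (hσ : σ ∈ relAut (fun _ : Unit => A)) (u v : W)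
    (h : A u v) : A (σ⁻¹ u) (σ⁻¹ v) := by
  refine (hσ () (σ⁻¹ u) (σ⁻¹ v)).2 ?_
  simpa using h

variable (σ : Equiv.Perm W) (hσ : σ ∈ relAut (fun _ : Unit => A))

lemma liftMap_inv (v : Omega A) :
    liftMap (σ⁻¹ : Equiv.Perm W) (relAut_bwd σ hσ) (liftMap σ (relAut_fwd σ hσ) v) = v := by
  rcases v with u | ⟨⟨⟨u₁, u₂⟩, ha⟩, t⟩
  · simp [liftMap]
  · simp [liftMap, Arc.map]

lemma liftMap_inv' (v : Omega A) :
    liftMap σ (relAut_fwd σ hσ) (liftMap (σ⁻¹ : Equiv.Perm W) (relAut_bwd σ hσ) v) = v := by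
  rcases v with u | ⟨⟨⟨u₁, u₂⟩, ha⟩, t⟩
  · simp [liftMap]
  · simp [liftMap, Arc.map]

/-- lift of a digraph automorphism -/
def liftPerm : Equiv.Perm (Omega A) where
  toFun := liftMap σ (relAut_fwd σ hσ)
  invFun := liftMap (σ⁻¹ : Equiv.Perm W) (relAut_bwd σ hσ)
  left_inv := liftMap_inv σ hσ
  right_inv := liftMap_inv' σ hσ

lemma liftPerm_mem : liftPerm σ hσ ∈ graphAut (Gr A) := by
  intro v w
  constructor
  · rintro (h | h)
    · exact Or.inl (liftMap_gr _ _ h)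
    · exact Or.inr (liftMap_gr _ _ h)
  · intro h
    have h2 : (Gr A).Adj (liftMap (σ⁻¹ : Equiv.Perm W) (relAut_bwd σ hσ) (liftPerm σ hσ v))
        (liftMap (σ⁻¹ : Equiv.Perm W) (relAut_bwd σ hσ) (liftPerm σ hσ w)) := by
      rcases h with h | h
      · exact Or.inl (liftMap_gr _ _ h)
      · exact Or.inr (liftMap_gr _ _ h)
    rwa [show (liftPerm σ hσ v : Omega A) = liftMap σ (relAut_fwd σ hσ) v from rfl,
      show (liftPerm σ hσ w : Omega A) = liftMap σ (relAut_fwd σ hσ) w from rfl,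
      liftMap_inv σ hσ, liftMap_inv σ hσ] at h2

end perm

/-- the lifting monoid hom from digraph automorphisms to graph automorphisms -/
def lift (A : W → W → Prop) : relAut (fun _ : Unit => A) →* graphAut (Gr A) where
  toFun σ := ⟨liftPerm σ.1 σ.2, liftPerm_mem σ.1 σ.2⟩
  map_one' := by
    apply Subtype.ext; apply Equiv.ext
    rintro (u | ⟨⟨⟨u₁, u₂⟩, ha⟩, t⟩) <;> rfl
  map_mul' := fun σ τ => by
    apply Subtype.ext; apply Equiv.ext
    rintro (u | ⟨⟨⟨u₁, u₂⟩, ha⟩, t⟩) <;> rfl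

lemma lift_apply_inl (σ : relAut (fun _ : Unit => A)) (u : W) :
    ((lift A σ : graphAut (Gr A)) : Equiv.Perm (Omega A)) (.inl u) = .inl (σ.1 u) := rfl

lemma lift_inj : Function.Injective (lift A) := by
  intro σ τ h
  apply Subtype.ext; apply Equiv.ext; intro u
  have := congrArg (fun g : graphAut (Gr A) => (g : Equiv.Perm (Omega A)) (.inl u)) h
  exact Sum.inl.inj this

end AR

namespace AR
variable {W : Type u} {A : W → W → Prop}

section surj
variable {e : Equiv.Perm (Omega A)} (he : e ∈ graphAut (Gr A))
include he

lemma adj_map {v w : Omega A} (h : (Gr A).Adj v w) : (Gr A).Adj (e v) (e w) := (he v w).1 h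

lemma adj_unmap {v w : Omega A} (h : (Gr A).Adj (e v) w) : (Gr A).Adj v (e⁻¹ w) := by
  refine (he v (e⁻¹ w)).2 ?_
  simpa using h

lemma deg1_map {v : Omega A} (hv : Deg1 A v) : Deg1 A (e v) := by
  obtain ⟨⟨w, hw⟩, huniq⟩ := hv
  refine ⟨⟨e w, adj_map he hw⟩, fun w₁ w₂ h₁ h₂ => ?_⟩
  have h₁' := adj_unmap he h₁
  have h₂' := adj_unmap he h₂
  have h3 := huniq _ _ h₁' h₂'
  simpa using congrArg e h3

lemma orig_map {v : Omega A} (hv : Orig A v) : Orig A (e v) := by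
  obtain ⟨⟨w₁, w₂, w₃, h₁, h₂, h₃, h12, h13, h23⟩, hnd⟩ := hv
  refine ⟨⟨e w₁, e w₂, e w₃, adj_map he h₁, adj_map he h₂, adj_map he h₃,
    fun h => h12 (e.injective h), fun h => h13 (e.injective h),
    fun h => h23 (e.injective h)⟩, fun w hw hd => ?_⟩
  have hw' := adj_unmap he hw
  have hd' : Deg1 A (e⁻¹ w) := deg1_map ((graphAut (Gr A)).inv_mem he) hd
  exact hnd _ hw' hd'

variable (hdeg : ∀ u : W, ∃ n₁ n₂ n₃ : W,
    n₁ ≠ n₂ ∧ n₁ ≠ n₃ ∧ n₂ ≠ n₃ ∧ NA A u n₁ ∧ NA A u n₂ ∧ NA A u n₃)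
include hdeg

lemma e_inl (u : W) : ∃ u', e (.inl u) = .inl u' :=
  (orig_iff hdeg).1 (orig_map he ((orig_iff hdeg).2 ⟨u, rfl⟩))

/-- the key structure lemma: an automorphism of the replacement graph is determined by
a map on original vertices, which it follows on all gadget vertices. -/
lemma main_struct : ∃ d : W → W, (∀ u, e (.inl u) = .inl (d u)) ∧
    ∀ a : Arc A, ∃ h' : A (d a.1.1) (d a.1.2),
      e (.inr (a, .x)) = .inr (⟨(d a.1.1, d a.1.2), h'⟩, .x) ∧
      e (.inr (a, .y)) = .inr (⟨(d a.1.1, d a.1.2), h'⟩, .y) ∧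
      e (.inr (a, .z)) = .inr (⟨(d a.1.1, d a.1.2), h'⟩, .z) := by
  have he' : (e⁻¹ : Equiv.Perm (Omega A)) ∈ graphAut (Gr A) := (graphAut (Gr A)).inv_mem he
  choose d hd using e_inl he hdeg
  choose d' hd' using e_inl he' hdeg
  refine ⟨d, hd, fun a => ?_⟩
  obtain ⟨b₀, hb₀⟩ := (deg1_iff hdeg).1 (deg1_map he (deg1_z a))
  have hax : (Gr A).Adj (e (.inr (a, .x))) (e (.inr (a, .z))) :=
    adj_map he ((adj_x A).2 (Or.inr (Or.inr rfl)))
  rw [hb₀] at hax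
  have hex : e (.inr (a, .x)) = .inr (b₀, .x) := (adj_z A).1 hax.symm
  have h1 : (Gr A).Adj (.inl (d a.1.1)) (.inr (b₀, .x)) := by
    have h := adj_map he (gadNbr_adj (Or.inl ⟨a.2, by cases a with | mk v p => rfl⟩ :
      GadNbr a.1.1 a.1.2 (.inr (a, .x))))
    rwa [hd, hex] at h
  have hb1 : b₀.1.1 = d a.1.1 := by
    rcases (adj_x A).1 h1.symm with h | h | h
    · exact (Sum.inl.inj h).symm
    · exact absurd h (by simp)
    · exact absurd h (by simp)
  have hay : (Gr A).Adj (.inr (b₀, .x)) (e (.inr (a, .y))) := by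
    have h := adj_map he (((adj_x A).2 (Or.inr (Or.inl rfl))) :
      (Gr A).Adj (.inr (a, .x)) (.inr (a, .y)))
    rwa [hex] at h
  have hey : e (.inr (a, .y)) = .inr (b₀, .y) := by
    rcases (adj_x A).1 hay with h | h | h
    · exfalso
      have h2 : e⁻¹ (e (.inr (a, .y))) = .inr (a, .y) := by simp
      rw [h, hd'] at h2
      exact absurd h2 (by simp)
    · exact h
    · exfalso
      have h2 : Deg1 A (e⁻¹ (.inr (b₀, .z))) := deg1_map he' (deg1_z b₀)
      rw [← h] at h2
      simp only [Equiv.Perm.coe_inv, Equiv.symm_apply_apply] at h2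
      exact not_deg1_y a h2
  have h2 : (Gr A).Adj (.inr (b₀, .y)) (.inl (d a.1.2)) := by
    have h := adj_map he (Or.inl (GR.yv a) : (Gr A).Adj (.inr (a, .y)) (.inl a.1.2))
    rwa [hey, hd] at h
  have hb2 : b₀.1.2 = d a.1.2 := by
    rcases (adj_y A).1 h2 with h | h
    · exact absurd h (by simp)
    · exact (Sum.inl.inj h).symm
  have hval : b₀.1 = (d a.1.1, d a.1.2) := Prod.ext hb1 hb2
  have hA' : A (d a.1.1) (d a.1.2) := by rw [← hb1, ← hb2]; exact b₀.2
  have hb : b₀ = (⟨(d a.1.1, d a.1.2), hA'⟩ : Arc A) := Subtype.ext hval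
  exact ⟨hA', by rw [hex, hb], by rw [hey, hb], by rw [hb₀, hb]⟩

lemma lift_surj' : ∃ σ : relAut (fun _ : Unit => A), lift A σ = ⟨e, he⟩ := by
  have he' : (e⁻¹ : Equiv.Perm (Omega A)) ∈ graphAut (Gr A) := (graphAut (Gr A)).inv_mem he
  obtain ⟨d, hd, hkey⟩ := main_struct he hdeg
  obtain ⟨d', hd', hkey'⟩ := main_struct he' hdeg
  have hdd' : ∀ u, d' (d u) = u := by
    intro u
    have h : e⁻¹ (e (.inl u)) = .inl u := by simp
    rw [hd u, hd' (d u)] at h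
    exact Sum.inl.inj h
  have hd'd : ∀ u, d (d' u) = u := by
    intro u
    have h : e (e⁻¹ (.inl u)) = .inl u := by simp
    rw [hd' u, hd (d' u)] at h
    exact Sum.inl.inj h
  set σ : Equiv.Perm W := ⟨d, d', hdd', hd'd⟩ with hσdef
  have hσmem : σ ∈ relAut (fun _ : Unit => A) := by
    intro i u v
    constructor
    · intro h
      exact (hkey ⟨(u, v), h⟩).1
    · intro h
      have h2 := (hkey' ⟨(d u, d v), h⟩).1
      simpa [hdd'] using h2
  refine ⟨⟨σ, hσmem⟩, ?_⟩
  apply Subtype.ext; apply Equiv.ext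
  rintro (u | ⟨a, t⟩)
  · exact (hd u).symm
  · obtain ⟨h', hx, hy, hz⟩ := hkey a
    cases t
    · exact hx.symm
    · exact hy.symm
    · exact hz.symm

end surj

/-- the main equivalence: graph automorphisms of the replacement graph are exactly
the lifted digraph automorphisms. -/
noncomputable def grAutEquiv (hdeg : ∀ u : W, ∃ n₁ n₂ n₃ : W,
    n₁ ≠ n₂ ∧ n₁ ≠ n₃ ∧ n₂ ≠ n₃ ∧ NA A u n₁ ∧ NA A u n₂ ∧ NA A u n₃) :
    graphAut (Gr A) ≃* relAut (fun _ : Unit => A) :=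
  (MulEquiv.ofBijective (lift A) ⟨lift_inj, by
    rintro ⟨e, he⟩
    exact lift_surj' he hdeg⟩).symm

/-- connectivity -/
lemma reach_inl (hconn : ∀ u v : W, Relation.ReflTransGen (NA A) u v) (u v : W) :
    (Gr A).Reachable (.inl u) (.inl v) := by
  have step : ∀ b c : W, NA A b c → (Gr A).Reachable (Sum.inl b : Omega A) (.inl c) := by
    have base : ∀ b c : W, A b c → (Gr A).Reachable (Sum.inl b : Omega A) (.inl c) := by
      intro b c h
      set a : Arc A := ⟨(b, c), h⟩
      have h1 : (Gr A).Adj (.inl b) (.inr (a, .x)) := Or.inl (GR.ux a)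
      have h2 : (Gr A).Adj (.inr (a, .x)) (.inr (a, .y)) := Or.inl (GR.xy a)
      have h3 : (Gr A).Adj (.inr (a, .y)) (.inl c) := Or.inl (GR.yv a)
      exact ((SimpleGraph.Adj.reachable h1).trans (SimpleGraph.Adj.reachable h2)).trans
        (SimpleGraph.Adj.reachable h3)
    rintro b c (h | h)
    · exact base b c h
    · exact (base c b h).symm
  induction hconn u v with
  | refl => exact SimpleGraph.Reachable.refl _
  | tail _ h ih => exact ih.trans (step _ _ h)

lemma gr_connected (hW : Nonempty W)
    (hconn : ∀ u v : W, Relation.ReflTransGen (NA A) u v) : (Gr A).Connected := by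
  obtain ⟨w₀⟩ := hW
  have hreach : ∀ v : Omega A, (Gr A).Reachable v (.inl w₀) := by
    intro v
    rcases v with u | ⟨a, t⟩
    · exact reach_inl hconn u w₀
    · have hx : (Gr A).Reachable (Sum.inr (a, Tag3.x) : Omega A) (.inl w₀) :=
        (SimpleGraph.Adj.reachable
          (Or.inr (GR.ux a) : (Gr A).Adj (.inr (a, .x)) (.inl a.1.1))).trans
          (reach_inl hconn a.1.1 w₀)
      cases t
      · exact hx
      · exact (SimpleGraph.Adj.reachable
          (Or.inr (GR.xy a) : (Gr A).Adj (.inr (a, .y)) (.inr (a, .x)))).trans hx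
      · exact (SimpleGraph.Adj.reachable
          (Or.inr (GR.xz a) : (Gr A).Adj (.inr (a, .z)) (.inr (a, .x)))).trans hx
  rw [SimpleGraph.connected_iff]
  exact ⟨fun v w => (hreach v).trans (hreach w).symm, ⟨.inl w₀⟩⟩

end AR

namespace AR
variable {V L : Type u}

inductive Tag2 : Type | p | q
deriving DecidableEq

/-- triples of a ternary labelled system -/
abbrev Tri (M : V → L → V → Prop) : Type u := {t : V × L × V // M t.1 t.2.1 t.2.2}

/-- vertices of the digraph encoding a ternary labelled system -/
abbrev DW (M : V → L → V → Prop) : Type u := V ⊕ (L ⊕ (Tri M × Tag2))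

variable (lt : L → L → Prop) (M : V → L → V → Prop)

/-- the arcs of the digraph encoding a ternary labelled system together with
a linear order on the labels -/
inductive DA : DW M → DW M → Prop
  | ap (t : Tri M) : DA (.inl t.1.1) (.inr (.inr (t, .p)))
  | bp (t : Tri M) : DA (.inr (.inl t.1.2.1)) (.inr (.inr (t, .p)))
  | pb (t : Tri M) : DA (.inr (.inr (t, .p))) (.inr (.inl t.1.2.1))
  | pq (t : Tri M) : DA (.inr (.inr (t, .p))) (.inr (.inr (t, .q)))
  | qc (t : Tri M) : DA (.inr (.inr (t, .q))) (.inl t.1.2.2)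
  | qb (t : Tri M) : DA (.inr (.inr (t, .q))) (.inr (.inl t.1.2.1))
  | al (a : V) (b : L) : DA (.inl a) (.inr (.inl b))
  | ll (b b' : L) : lt b b' → DA (.inr (.inl b)) (.inr (.inl b'))

variable {lt M}

lemma da_cases {v w : DW M} (h : DA lt M v w) :
    (∃ t : Tri M, v = .inl t.1.1 ∧ w = .inr (.inr (t, .p))) ∨
    (∃ t : Tri M, v = .inr (.inl t.1.2.1) ∧ w = .inr (.inr (t, .p))) ∨
    (∃ t : Tri M, v = .inr (.inr (t, .p)) ∧ w = .inr (.inl t.1.2.1)) ∨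
    (∃ t : Tri M, v = .inr (.inr (t, .p)) ∧ w = .inr (.inr (t, .q))) ∨
    (∃ t : Tri M, v = .inr (.inr (t, .q)) ∧ w = .inl t.1.2.2) ∨
    (∃ t : Tri M, v = .inr (.inr (t, .q)) ∧ w = .inr (.inl t.1.2.1)) ∨
    (∃ (a : V) (b : L), v = .inl a ∧ w = .inr (.inl b)) ∨
    (∃ b b' : L, lt b b' ∧ v = .inr (.inl b) ∧ w = .inr (.inl b')) := by
  cases h with
  | ap t => exact Or.inl ⟨t, rfl, rfl⟩
  | bp t => exact Or.inr (Or.inl ⟨t, rfl, rfl⟩)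
  | pb t => exact Or.inr (Or.inr (Or.inl ⟨t, rfl, rfl⟩))
  | pq t => exact Or.inr (Or.inr (Or.inr (Or.inl ⟨t, rfl, rfl⟩)))
  | qc t => exact Or.inr (Or.inr (Or.inr (Or.inr (Or.inl ⟨t, rfl, rfl⟩))))
  | qb t => exact Or.inr (Or.inr (Or.inr (Or.inr (Or.inr (Or.inl ⟨t, rfl, rfl⟩)))))
  | al a b => exact Or.inr (Or.inr (Or.inr (Or.inr (Or.inr (Or.inr (Or.inl ⟨a, b, rfl, rfl⟩))))))
  | ll b b' h =>
      exact Or.inr (Or.inr (Or.inr (Or.inr (Or.inr (Or.inr (Or.inr ⟨b, b', h, rfl, rfl⟩))))))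

/-- on a 2-cycle -/
def OnTwo (lt : L → L → Prop) (M : V → L → V → Prop) (v : DW M) : Prop :=
  ∃ w, DA lt M v w ∧ DA lt M w v

lemma not_onTwo_main (a : V) : ¬ OnTwo lt M (.inl a) := by
  rintro ⟨w, h1, h2⟩
  rcases da_cases h1 with ⟨t,h,h'⟩|⟨t,h,h'⟩|⟨t,h,h'⟩|⟨t,h,h'⟩|⟨t,h,h'⟩|⟨t,h,h'⟩|⟨x,b,h,h'⟩|⟨b,b',hl,h,h'⟩ <;>
    rcases da_cases h2 with ⟨s,g,g'⟩|⟨s,g,g'⟩|⟨s,g,g'⟩|⟨s,g,g'⟩|⟨s,g,g'⟩|⟨s,g,g'⟩|⟨y,c,g,g'⟩|⟨c,c',gl,g,g'⟩ <;>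
    simp_all

lemma not_onTwo_q (t : Tri M) : ¬ OnTwo lt M (.inr (.inr (t, .q))) := by
  rintro ⟨w, h1, h2⟩
  rcases da_cases h1 with ⟨t,h,h'⟩|⟨t,h,h'⟩|⟨t,h,h'⟩|⟨t,h,h'⟩|⟨t,h,h'⟩|⟨t,h,h'⟩|⟨x,b,h,h'⟩|⟨b,b',hl,h,h'⟩ <;>
    rcases da_cases h2 with ⟨s,g,g'⟩|⟨s,g,g'⟩|⟨s,g,g'⟩|⟨s,g,g'⟩|⟨s,g,g'⟩|⟨s,g,g'⟩|⟨y,c,g,g'⟩|⟨c,c',gl,g,g'⟩ <;>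
    simp_all

lemma onTwo_p (t : Tri M) : OnTwo lt M (.inr (.inr (t, .p))) :=
  ⟨.inr (.inl t.1.2.1), DA.pb t, DA.bp t⟩

/-- neighbours of a p-gadget vertex -/
lemma nd_p {t : Tri M} {w : DW M} (h : NA (DA lt M) (.inr (.inr (t, .p))) w) :
    w = .inl t.1.1 ∨ w = .inr (.inl t.1.2.1) ∨ w = .inr (.inr (t, .q)) := by
  rcases h with h | h <;>
    rcases da_cases h with ⟨s,g,g'⟩|⟨s,g,g'⟩|⟨s,g,g'⟩|⟨s,g,g'⟩|⟨s,g,g'⟩|⟨s,g,g'⟩|⟨y,c,g,g'⟩|⟨c,c',gl,g,g'⟩ <;>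
    simp_all

/-- neighbours of a q-gadget vertex -/
lemma nd_q {t : Tri M} {w : DW M} (h : NA (DA lt M) (.inr (.inr (t, .q))) w) :
    w = .inl t.1.2.2 ∨ w = .inr (.inl t.1.2.1) ∨ w = .inr (.inr (t, .p)) := by
  rcases h with h | h <;>
    rcases da_cases h with ⟨s,g,g'⟩|⟨s,g,g'⟩|⟨s,g,g'⟩|⟨s,g,g'⟩|⟨s,g,g'⟩|⟨s,g,g'⟩|⟨y,c,g,g'⟩|⟨c,c',gl,g,g'⟩ <;>
    simp_all

end AR

namespace AR
variable {V L : Type u} {lt : L → L → Prop} {M : V → L → V → Prop}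

/-- at least 4 distinct neighbours -/
def Ge4 (lt : L → L → Prop) (M : V → L → V → Prop) (v : DW M) : Prop :=
  ∃ w₁ w₂ w₃ w₄ : DW M, w₁ ≠ w₂ ∧ w₁ ≠ w₃ ∧ w₁ ≠ w₄ ∧ w₂ ≠ w₃ ∧ w₂ ≠ w₄ ∧ w₃ ≠ w₄ ∧
    NA (DA lt M) v w₁ ∧ NA (DA lt M) v w₂ ∧ NA (DA lt M) v w₃ ∧ NA (DA lt M) v w₄

lemma not_ge4_p (t : Tri M) : ¬ Ge4 lt M (.inr (.inr (t, .p))) := by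
  rintro ⟨w₁, w₂, w₃, w₄, h12, h13, h14, h23, h24, h34, n₁, n₂, n₃, n₄⟩
  rcases nd_p n₁ with h|h|h <;> rcases nd_p n₂ with g|g|g <;> rcases nd_p n₃ with f|f|f <;>
    rcases nd_p n₄ with e|e|e <;> simp_all

lemma not_ge4_q (t : Tri M) : ¬ Ge4 lt M (.inr (.inr (t, .q))) := by
  rintro ⟨w₁, w₂, w₃, w₄, h12, h13, h14, h23, h24, h34, n₁, n₂, n₃, n₄⟩
  rcases nd_q n₁ with h|h|h <;> rcases nd_q n₂ with g|g|g <;> rcases nd_q n₃ with f|f|f <;>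
    rcases nd_q n₄ with e|e|e <;> simp_all

section hyps
variable [IsWellOrder L lt] (hV : Nonempty V) (hLne : Nonempty L)
  (hL3 : ∀ b : L, ∃ c₁ c₂ c₃ : L,
    c₁ ≠ c₂ ∧ c₁ ≠ c₃ ∧ c₂ ≠ c₃ ∧ c₁ ≠ b ∧ c₂ ≠ b ∧ c₃ ≠ b)
  (hC1 : ∀ a : V, ∃ t : Tri M, t.1.1 = a)

lemma lab_nd (a : V) (b : L) : NA (DA lt M) (.inl a) (.inr (.inl b)) := Or.inl (DA.al a b)

include hLne hL3 in
lemma ge4_main (a : V) : Ge4 lt M (.inl a) := by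
  obtain ⟨b₀⟩ := hLne
  obtain ⟨c₁, c₂, c₃, h12, h13, h23, h1, h2, h3⟩ := hL3 b₀
  exact ⟨.inr (.inl c₁), .inr (.inl c₂), .inr (.inl c₃), .inr (.inl b₀),
    by simp [h12], by simp [h13], by simp [h1], by simp [h23], by simp [h2], by simp [h3],
    lab_nd a c₁, lab_nd a c₂, lab_nd a c₃, lab_nd a b₀⟩

include hV hL3 in
lemma ge4_lab (b : L) : Ge4 lt M (.inr (.inl b)) := by
  obtain ⟨a₀⟩ := hV
  obtain ⟨c₁, c₂, c₃, h12, h13, h23, h1, h2, h3⟩ := hL3 b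
  have harc : ∀ c : L, c ≠ b → NA (DA lt M) (.inr (.inl b)) (.inr (.inl c)) := by
    intro c hc
    rcases trichotomous_of lt b c with h | h | h
    · exact Or.inl (DA.ll b c h)
    · exact absurd h.symm hc
    · exact Or.inr (DA.ll c b h)
  exact ⟨.inr (.inl c₁), .inr (.inl c₂), .inr (.inl c₃), .inl a₀,
    by simp [h12], by simp [h13], by simp, by simp [h23], by simp, by simp,
    harc c₁ h1, harc c₂ h2, harc c₃ h3, Or.inr (DA.al a₀ b)⟩

include hV hLne hL3 in
lemma pC_iff {v : DW M} :
    (OnTwo lt M v ∧ ¬ Ge4 lt M v) ↔ ∃ t : Tri M, v = .inr (.inr (t, .p)) := by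
  constructor
  · rintro ⟨h2, h4⟩
    rcases v with a | b | ⟨t, s⟩
    · exact absurd (ge4_main hLne hL3 a) h4
    · exact absurd (ge4_lab hV hL3 b) h4
    · cases s
      · exact ⟨t, rfl⟩
      · exact absurd h2 (not_onTwo_q t)
  · rintro ⟨t, rfl⟩
    exact ⟨onTwo_p t, not_ge4_p t⟩

include hV hLne hL3 in
lemma qC_iff {v : DW M} :
    (¬ OnTwo lt M v ∧ ¬ Ge4 lt M v) ↔ ∃ t : Tri M, v = .inr (.inr (t, .q)) := by
  constructor
  · rintro ⟨h2, h4⟩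
    rcases v with a | b | ⟨t, s⟩
    · exact absurd (ge4_main hLne hL3 a) h4
    · exact absurd (ge4_lab hV hL3 b) h4
    · cases s
      · exact absurd (onTwo_p t) h2
      · exact ⟨t, rfl⟩
  · rintro ⟨t, rfl⟩
    exact ⟨not_onTwo_q t, not_ge4_q t⟩

/-- the "main vertex" class -/
def MainC (lt : L → L → Prop) (M : V → L → V → Prop) (v : DW M) : Prop :=
  Ge4 lt M v ∧ ∃ w, (OnTwo lt M w ∧ ¬ Ge4 lt M w) ∧ DA lt M v w ∧ ¬ DA lt M w v

include hV hLne hL3 hC1 in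
lemma mainC_iff {v : DW M} : MainC lt M v ↔ ∃ a : V, v = .inl a := by
  constructor
  · rintro ⟨h4, w, hw, hvw, hwv⟩
    obtain ⟨t, rfl⟩ := (pC_iff hV hLne hL3).1 hw
    rcases v with a | b | ⟨s, r⟩
    · exact ⟨a, rfl⟩
    · exfalso
      rcases da_cases hvw with ⟨s,g,g'⟩|⟨s,g,g'⟩|⟨s,g,g'⟩|⟨s,g,g'⟩|⟨s,g,g'⟩|⟨s,g,g'⟩|⟨y,c,g,g'⟩|⟨c,c',gl,g,g'⟩ <;>
        simp_all
      subst g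
      rcases g' with ⟨rfl, -⟩
      exact hwv (DA.pb t)
    · cases r
      · exact absurd h4 (not_ge4_p s)
      · exact absurd h4 (not_ge4_q s)
  · rintro ⟨a, rfl⟩
    obtain ⟨t, ht⟩ := hC1 a
    refine ⟨ge4_main hLne hL3 a, .inr (.inr (t, .p)), ⟨onTwo_p t, not_ge4_p t⟩, ?_, ?_⟩
    · rw [← ht]; exact DA.ap t
    · intro h
      rcases da_cases h with ⟨s,g,g'⟩|⟨s,g,g'⟩|⟨s,g,g'⟩|⟨s,g,g'⟩|⟨s,g,g'⟩|⟨s,g,g'⟩|⟨y,c,g,g'⟩|⟨c,c',gl,g,g'⟩ <;>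
        simp_all

include hV hLne hL3 hC1 in
lemma labC_iff {v : DW M} :
    (Ge4 lt M v ∧ ¬ MainC lt M v) ↔ ∃ b : L, v = .inr (.inl b) := by
  constructor
  · rintro ⟨h4, hm⟩
    rcases v with a | b | ⟨s, r⟩
    · exact absurd ((mainC_iff hV hLne hL3 hC1).2 ⟨a, rfl⟩) hm
    · exact ⟨b, rfl⟩
    · cases r
      · exact absurd h4 (not_ge4_p s)
      · exact absurd h4 (not_ge4_q s)
  · rintro ⟨b, rfl⟩
    refine ⟨ge4_lab hV hL3 b, fun hm => ?_⟩
    obtain ⟨a, ha⟩ := (mainC_iff hV hLne hL3 hC1).1 hm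
    simp at ha

end hyps
end AR

namespace AR
variable {V L : Type u} {lt : L → L → Prop} {M : V → L → V → Prop}

section dinv
variable {e : Equiv.Perm (DW M)} (he : e ∈ relAut (fun _ : Unit => DA lt M))
include he

lemma da_map {v w : DW M} (h : DA lt M v w) : DA lt M (e v) (e w) := (he () v w).1 h

lemma da_unmap {v w : DW M} (h : DA lt M (e v) (e w)) : DA lt M v w := (he () v w).2 h

lemma nd_map {v w : DW M} (h : NA (DA lt M) v w) : NA (DA lt M) (e v) (e w) := by
  rcases h with h | h
  · exact Or.inl (da_map he h)
  · exact Or.inr (da_map he h)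

lemma onTwo_map {v : DW M} (h : OnTwo lt M v) : OnTwo lt M (e v) := by
  obtain ⟨w, h1, h2⟩ := h
  exact ⟨e w, da_map he h1, da_map he h2⟩

lemma ge4_map {v : DW M} (h : Ge4 lt M v) : Ge4 lt M (e v) := by
  obtain ⟨w₁, w₂, w₃, w₄, h12, h13, h14, h23, h24, h34, n₁, n₂, n₃, n₄⟩ := h
  exact ⟨e w₁, e w₂, e w₃, e w₄,
    fun h => h12 (e.injective h), fun h => h13 (e.injective h), fun h => h14 (e.injective h),
    fun h => h23 (e.injective h), fun h => h24 (e.injective h), fun h => h34 (e.injective h),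
    nd_map he n₁, nd_map he n₂, nd_map he n₃, nd_map he n₄⟩

lemma onTwo_unmap {v : DW M} (h : OnTwo lt M (e v)) : OnTwo lt M v := by
  obtain ⟨w, h1, h2⟩ := h
  refine ⟨e⁻¹ w, da_unmap he ?_, da_unmap he ?_⟩ <;> simpa

lemma ge4_unmap {v : DW M} (h : Ge4 lt M (e v)) : Ge4 lt M v := by
  obtain ⟨w₁, w₂, w₃, w₄, h12, h13, h14, h23, h24, h34, n₁, n₂, n₃, n₄⟩ := h
  refine ⟨e⁻¹ w₁, e⁻¹ w₂, e⁻¹ w₃, e⁻¹ w₄,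
    fun h => h12 (by simpa using congrArg e h), fun h => h13 (by simpa using congrArg e h),
    fun h => h14 (by simpa using congrArg e h), fun h => h23 (by simpa using congrArg e h),
    fun h => h24 (by simpa using congrArg e h), fun h => h34 (by simpa using congrArg e h),
    ?_, ?_, ?_, ?_⟩
  · have := nd_map ((relAut _).inv_mem he) (v := e v) (w := w₁) n₁
    simpa using this
  · have := nd_map ((relAut _).inv_mem he) (v := e v) (w := w₂) n₂
    simpa using this
  · have := nd_map ((relAut _).inv_mem he) (v := e v) (w := w₃) n₃
    simpa using this
  · have := nd_map ((relAut _).inv_mem he) (v := e v) (w := w₄) n₄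
    simpa using this

lemma mainC_map {v : DW M} (h : MainC lt M v) : MainC lt M (e v) := by
  obtain ⟨h4, w, ⟨hw2, hw4⟩, hvw, hwv⟩ := h
  refine ⟨ge4_map he h4, e w, ⟨onTwo_map he hw2, fun h => hw4 (ge4_unmap he h)⟩,
    da_map he hvw, fun h => hwv (da_unmap he h)⟩

end dinv

section dstruct
variable [IsWellOrder L lt] (hV : Nonempty V) (hLne : Nonempty L)
  (hL3 : ∀ b : L, ∃ c₁ c₂ c₃ : L,
    c₁ ≠ c₂ ∧ c₁ ≠ c₃ ∧ c₂ ≠ c₃ ∧ c₁ ≠ b ∧ c₂ ≠ b ∧ c₃ ≠ b)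
  (hC1 : ∀ a : V, ∃ t : Tri M, t.1.1 = a)
  {e : Equiv.Perm (DW M)} (he : e ∈ relAut (fun _ : Unit => DA lt M))
include hV hLne hL3 hC1 he

lemma d_struct :
    ∃ (σ : V → V) (τ : L → L),
      (∀ a, e (.inl a) = .inl (σ a)) ∧ (∀ b, e (.inr (.inl b)) = .inr (.inl (τ b))) ∧
      (∀ b b', lt b b' → lt (τ b) (τ b')) ∧
      ∀ t : Tri M, ∃ h' : M (σ t.1.1) (τ t.1.2.1) (σ t.1.2.2),
        e (.inr (.inr (t, .p))) = .inr (.inr (⟨(σ t.1.1, τ t.1.2.1, σ t.1.2.2), h'⟩, .p)) ∧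
        e (.inr (.inr (t, .q))) = .inr (.inr (⟨(σ t.1.1, τ t.1.2.1, σ t.1.2.2), h'⟩, .q)) := by
  have hmain : ∀ a : V, ∃ a' : V, e (.inl a) = .inl a' := by
    intro a
    exact (mainC_iff hV hLne hL3 hC1).1
      (mainC_map he ((mainC_iff hV hLne hL3 hC1).2 ⟨a, rfl⟩))
  choose σ hσ using hmain
  have hlab : ∀ b : L, ∃ b' : L, e (.inr (.inl b)) = .inr (.inl b') := by
    intro b
    have h1 : Ge4 lt M (.inr (.inl b) : DW M) ∧ ¬ MainC lt M (.inr (.inl b) : DW M) :=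
      (labC_iff hV hLne hL3 hC1).2 ⟨b, rfl⟩
    refine (labC_iff hV hLne hL3 hC1).1 ⟨ge4_map he h1.1, fun hm => h1.2 ?_⟩
    have := mainC_map ((relAut _).inv_mem he) hm
    simpa using this
  choose τ hτ using hlab
  refine ⟨σ, τ, hσ, hτ, ?_, ?_⟩
  · intro b b' hbb
    have h := da_map he (DA.ll b b' hbb)
    rw [hτ, hτ] at h
    rcases da_cases h with ⟨s,g,g'⟩|⟨s,g,g'⟩|⟨s,g,g'⟩|⟨s,g,g'⟩|⟨s,g,g'⟩|⟨s,g,g'⟩|⟨y,c,g,g'⟩|⟨c,c',gl,g,g'⟩ <;>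
      simp_all only [Sum.inl.injEq, Sum.inr.injEq, Prod.mk.injEq, reduceCtorEq, and_true,
        true_and, and_false, false_and]
  · intro t
    -- p-vertex goes to a p-vertex
    have hp : ∃ t' : Tri M, e (.inr (.inr (t, .p))) = .inr (.inr (t', .p)) := by
      refine (pC_iff hV hLne hL3).1 ⟨onTwo_map he (onTwo_p t), fun h4 => ?_⟩
      exact not_ge4_p t (ge4_unmap he h4)
    obtain ⟨t', hp⟩ := hp
    have hq : ∃ s : Tri M, e (.inr (.inr (t, .q))) = .inr (.inr (s, .q)) := by
      refine (qC_iff hV hLne hL3).1 ⟨fun h2 => not_onTwo_q t (onTwo_unmap he h2), fun h4 => ?_⟩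
      exact not_ge4_q t (ge4_unmap he h4)
    obtain ⟨s, hq⟩ := hq
    -- identify components
    have h1 : t'.1.1 = σ t.1.1 := by
      have h := da_map he (DA.ap t)
      rw [hσ, hp] at h
      rcases da_cases h with ⟨s',g,g'⟩|⟨s',g,g'⟩|⟨s',g,g'⟩|⟨s',g,g'⟩|⟨s',g,g'⟩|⟨s',g,g'⟩|⟨y,c,g,g'⟩|⟨c,c',gl,g,g'⟩ <;>
        simp_all only [Sum.inl.injEq, Sum.inr.injEq, Prod.mk.injEq, reduceCtorEq, and_true,
          true_and, and_false, false_and]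
    have h2 : t'.1.2.1 = τ t.1.2.1 := by
      have h := da_map he (DA.pb t)
      rw [hτ, hp] at h
      rcases da_cases h with ⟨s',g,g'⟩|⟨s',g,g'⟩|⟨s',g,g'⟩|⟨s',g,g'⟩|⟨s',g,g'⟩|⟨s',g,g'⟩|⟨y,c,g,g'⟩|⟨c,c',gl,g,g'⟩ <;>
        simp_all only [Sum.inl.injEq, Sum.inr.injEq, Prod.mk.injEq, reduceCtorEq, and_true,
          true_and, and_false, false_and]
    have hs : s = t' := by
      have h := da_map he (DA.pq t)
      rw [hp, hq] at h
      rcases da_cases h with ⟨s',g,g'⟩|⟨s',g,g'⟩|⟨s',g,g'⟩|⟨s',g,g'⟩|⟨s',g,g'⟩|⟨s',g,g'⟩|⟨y,c,g,g'⟩|⟨c,c',gl,g,g'⟩ <;>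
        simp_all only [Sum.inl.injEq, Sum.inr.injEq, Prod.mk.injEq, reduceCtorEq, and_true,
          true_and, and_false, false_and]
    have h3 : t'.1.2.2 = σ t.1.2.2 := by
      have h := da_map he (DA.qc t)
      rw [hσ, hq, hs] at h
      rcases da_cases h with ⟨s',g,g'⟩|⟨s',g,g'⟩|⟨s',g,g'⟩|⟨s',g,g'⟩|⟨s',g,g'⟩|⟨s',g,g'⟩|⟨y,c,g,g'⟩|⟨c,c',gl,g,g'⟩ <;>
        simp_all only [Sum.inl.injEq, Sum.inr.injEq, Prod.mk.injEq, reduceCtorEq, and_true,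
          true_and, and_false, false_and]
    have hval : t'.1 = (σ t.1.1, τ t.1.2.1, σ t.1.2.2) :=
      Prod.ext h1 (Prod.ext h2 h3)
    have hM : M (σ t.1.1) (τ t.1.2.1) (σ t.1.2.2) := by
      rw [← h1, ← h2, ← h3]; exact t'.2
    have ht' : t' = (⟨(σ t.1.1, τ t.1.2.1, σ t.1.2.2), hM⟩ : Tri M) := Subtype.ext hval
    exact ⟨hM, by rw [hp, ht'], by rw [hq, hs, ht']⟩

end dstruct
end AR

namespace AR
variable {V L : Type u} {lt : L → L → Prop} {M : V → L → V → Prop}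

/-- the ternary system as an `I`-indexed binary relational system -/
abbrev tern (M : V → L → V → Prop) : L → V → V → Prop := fun l v w => M v l w

def triMap (σ : Equiv.Perm V) (hσ : σ ∈ relAut (tern M)) (t : Tri M) : Tri M :=
  ⟨(σ t.1.1, t.1.2.1, σ t.1.2.2), (hσ _ _ _).1 t.2⟩

def dwMap (σ : Equiv.Perm V) (hσ : σ ∈ relAut (tern M)) : DW M → DW M
  | .inl a => .inl (σ a)
  | .inr (.inl b) => .inr (.inl b)
  | .inr (.inr (t, s)) => .inr (.inr (triMap σ hσ t, s))

lemma dwMap_inv (σ : Equiv.Perm V) (hσ : σ ∈ relAut (tern M))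
    (hσ' : (σ⁻¹ : Equiv.Perm V) ∈ relAut (tern M)) (x : DW M) :
    dwMap σ⁻¹ hσ' (dwMap σ hσ x) = x := by
  rcases x with a | b | ⟨⟨⟨a, b, c⟩, hM⟩, s⟩
  · simp [dwMap]
  · simp [dwMap]
  · simp [dwMap, triMap]

lemma dwMap_da (σ : Equiv.Perm V) (hσ : σ ∈ relAut (tern M)) {v w : DW M}
    (h : DA lt M v w) : DA lt M (dwMap σ hσ v) (dwMap σ hσ w) := by
  cases h with
  | ap t => exact DA.ap (triMap σ hσ t)
  | bp t => exact DA.bp (triMap σ hσ t)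
  | pb t => exact DA.pb (triMap σ hσ t)
  | pq t => exact DA.pq (triMap σ hσ t)
  | qc t => exact DA.qc (triMap σ hσ t)
  | qb t => exact DA.qb (triMap σ hσ t)
  | al a b => exact DA.al (σ a) b
  | ll b b' h => exact DA.ll b b' h

variable (lt M)

/-- the lifting hom from ternary-system automorphisms to digraph automorphisms -/
def dlift : relAut (tern M) →* relAut (fun _ : Unit => DA lt M) where
  toFun σ := by
    refine ⟨⟨dwMap σ.1 σ.2, dwMap σ.1⁻¹ ((relAut (tern M)).inv_mem σ.2), ?_, ?_⟩, ?_⟩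
    · exact dwMap_inv σ.1 σ.2 _
    · intro x
      have h := dwMap_inv (M := M) σ.1⁻¹ ((relAut (tern M)).inv_mem σ.2)
        (by simpa using σ.2) x
      simpa using h
    · intro i v w
      constructor
      · exact fun h => dwMap_da σ.1 σ.2 h
      · intro h
        have h2 := dwMap_da (lt := lt) σ.1⁻¹ ((relAut (tern M)).inv_mem σ.2) h
        simp only [Equiv.coe_fn_mk] at h2
        rwa [dwMap_inv σ.1 σ.2, dwMap_inv σ.1 σ.2] at h2
  map_one' := by
    apply Subtype.ext; apply Equiv.ext
    rintro (a | b | ⟨⟨⟨a, b, c⟩, hM⟩, s⟩) <;> rfl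
  map_mul' := fun σ τ => by
    apply Subtype.ext; apply Equiv.ext
    rintro (a | b | ⟨⟨⟨a, b, c⟩, hM⟩, s⟩) <;> rfl

lemma dlift_apply_inl (σ : relAut (tern M)) (a : V) :
    ((dlift lt M σ : relAut (fun _ : Unit => DA lt M)) : Equiv.Perm (DW M)) (.inl a) =
      .inl (σ.1 a) := rfl

lemma dlift_inj : Function.Injective (dlift lt M) := by
  intro σ τ h
  apply Subtype.ext; apply Equiv.ext; intro a
  have := congrArg (fun g : relAut (fun _ : Unit => DA lt M) =>
    (g : Equiv.Perm (DW M)) (.inl a)) h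
  exact Sum.inl.inj this

variable {lt M}

section bij
variable [IsWellOrder L lt] (hV : Nonempty V) (hLne : Nonempty L)
  (hL3 : ∀ b : L, ∃ c₁ c₂ c₃ : L,
    c₁ ≠ c₂ ∧ c₁ ≠ c₃ ∧ c₂ ≠ c₃ ∧ c₁ ≠ b ∧ c₂ ≠ b ∧ c₃ ≠ b)
  (hC1 : ∀ a : V, ∃ t : Tri M, t.1.1 = a)
include hV hLne hL3 hC1

lemma dlift_surj : Function.Surjective (dlift lt M) := by
  rintro ⟨e, he⟩
  have he' : (e⁻¹ : Equiv.Perm (DW M)) ∈ relAut (fun _ : Unit => DA lt M) :=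
    (relAut _).inv_mem he
  obtain ⟨σ, τ, hσ, hτ, hord, hkey⟩ := d_struct hV hLne hL3 hC1 he
  obtain ⟨σ', τ', hσ', hτ', hord', hkey'⟩ := d_struct hV hLne hL3 hC1 he'
  have hσσ' : ∀ a, σ' (σ a) = a := by
    intro a
    have h : e⁻¹ (e (.inl a)) = (.inl a : DW M) := by simp
    rw [hσ a, hσ' (σ a)] at h
    exact Sum.inl.inj h
  have hσ'σ : ∀ a, σ (σ' a) = a := by
    intro a
    have h : e (e⁻¹ (.inl a)) = (.inl a : DW M) := by simp
    rw [hσ' a, hσ (σ' a)] at h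
    exact Sum.inl.inj h
  have hττ' : ∀ b, τ' (τ b) = b := by
    intro b
    have h : e⁻¹ (e (.inr (.inl b))) = (.inr (.inl b) : DW M) := by simp
    rw [hτ b, hτ' (τ b)] at h
    exact Sum.inl.inj (Sum.inr.inj h)
  have hτ'τ : ∀ b, τ (τ' b) = b := by
    intro b
    have h : e (e⁻¹ (.inr (.inl b))) = (.inr (.inl b) : DW M) := by simp
    rw [hτ' b, hτ (τ' b)] at h
    exact Sum.inl.inj (Sum.inr.inj h)
  -- τ is the identity, by rigidity of well-orders
  have hτid : ∀ b, τ b = b := by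
    intro b
    set g : lt ≃r lt :=
      ⟨⟨τ, τ', hττ', hτ'τ⟩, by
        intro b b'
        simp only [Equiv.coe_fn_mk]
        constructor
        · intro h
          have h2 := hord' _ _ h
          rwa [hττ', hττ'] at h2
        · exact fun h => hord _ _ h⟩ with hg
    have h : g.toInitialSeg = InitialSeg.refl lt := Subsingleton.elim _ _
    have h2 := congrFun (congrArg (fun f : InitialSeg lt lt => (f : L → L)) h) b
    simp at h2; exact h2
  have hτ'id : ∀ b, τ' b = b := by
    intro b
    conv_lhs => rw [← hτid b]
    rw [hττ']
  set σP : Equiv.Perm V := ⟨σ, σ', hσσ', hσ'σ⟩ with hσP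
  have hmem : σP ∈ relAut (tern M) := by
    intro l v w
    constructor
    · intro h
      have h2 := (hkey ⟨(v, l, w), h⟩).1
      rwa [hτid] at h2
    · intro h
      have h2 := (hkey' ⟨(σ v, l, σ w), h⟩).1
      simp only [hτ'id, hσσ'] at h2
      exact h2
  refine ⟨⟨σP, hmem⟩, ?_⟩
  apply Subtype.ext; apply Equiv.ext
  rintro (a | b | ⟨t, s⟩)
  · exact (hσ a).symm
  · rw [hτ b, hτid b]
    rfl
  · obtain ⟨h', hp, hq⟩ := hkey t
    cases s
    · rw [hp]
      have : triMap σP hmem t = ⟨(σ t.1.1, τ t.1.2.1, σ t.1.2.2), h'⟩ :=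
        Subtype.ext (Prod.ext rfl (Prod.ext (hτid t.1.2.1).symm rfl))
      exact congrArg (fun x => Sum.inr (Sum.inr (x, Tag2.p))) this
    · rw [hq]
      have : triMap σP hmem t = ⟨(σ t.1.1, τ t.1.2.1, σ t.1.2.2), h'⟩ :=
        Subtype.ext (Prod.ext rfl (Prod.ext (hτid t.1.2.1).symm rfl))
      exact congrArg (fun x => Sum.inr (Sum.inr (x, Tag2.q))) this

lemma da_hdeg : ∀ w : DW M, ∃ n₁ n₂ n₃ : DW M,
    n₁ ≠ n₂ ∧ n₁ ≠ n₃ ∧ n₂ ≠ n₃ ∧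
    NA (DA lt M) w n₁ ∧ NA (DA lt M) w n₂ ∧ NA (DA lt M) w n₃ := by
  rintro (a | b | ⟨t, s⟩)
  · obtain ⟨w₁, w₂, w₃, _, h12, h13, _, h23, _, _, n₁, n₂, n₃, _⟩ := ge4_main (lt := lt) (M := M) hLne hL3 a
    exact ⟨w₁, w₂, w₃, h12, h13, h23, n₁, n₂, n₃⟩
  · obtain ⟨w₁, w₂, w₃, _, h12, h13, _, h23, _, _, n₁, n₂, n₃, _⟩ := ge4_lab (lt := lt) (M := M) hV hL3 b
    exact ⟨w₁, w₂, w₃, h12, h13, h23, n₁, n₂, n₃⟩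
  · cases s
    · exact ⟨.inl t.1.1, .inr (.inl t.1.2.1), .inr (.inr (t, .q)),
        by simp, by simp, by simp,
        Or.inr (DA.ap t), Or.inl (DA.pb t), Or.inl (DA.pq t)⟩
    · exact ⟨.inl t.1.2.2, .inr (.inl t.1.2.1), .inr (.inr (t, .p)),
        by simp, by simp, by simp,
        Or.inl (DA.qc t), Or.inl (DA.qb t), Or.inr (DA.pq t)⟩

end bij

lemma da_conn (hV : Nonempty V) (hLne : Nonempty L) :
    ∀ u v : DW M, Relation.ReflTransGen (NA (DA lt M)) u v := by
  obtain ⟨a₀⟩ := hV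
  obtain ⟨b₀⟩ := hLne
  have hsym : Symmetric (NA (DA lt M)) := fun u v h => Or.symm h
  have hbase : ∀ w : DW M, Relation.ReflTransGen (NA (DA lt M)) w (.inr (.inl b₀)) := by
    have hstep : ∀ b : L,
        Relation.ReflTransGen (NA (DA lt M)) (.inr (.inl b)) (.inr (.inl b₀)) := by
      intro b
      exact Relation.ReflTransGen.head (Or.inr (DA.al a₀ b))
        (Relation.ReflTransGen.single (Or.inl (DA.al a₀ b₀)))
    rintro (a | b | ⟨t, s⟩)
    · exact Relation.ReflTransGen.single (Or.inl (DA.al a b₀))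
    · exact hstep b
    · cases s
      · exact Relation.ReflTransGen.head (Or.inl (DA.pb t)) (hstep t.1.2.1)
      · exact Relation.ReflTransGen.head (Or.inl (DA.qb t)) (hstep t.1.2.1)
  intro u v
  exact (hbase u).trans ((@Relation.ReflTransGen.stdSymm _ _ ⟨fun _ _ h => hsym h⟩).symm _ _ (hbase v))

end AR

namespace AR
section App1
variable (G₁ : Type u) [Group G₁]

/-- labels for the Cayley system: group elements plus an infinite rigid pad -/
abbrev L1 : Type u := G₁ ⊕ ULift.{u} ℕ

/-- the Cayley ternary system of `G₁`, with loops labelled by the pad element `0` -/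
def M1 : G₁ → L1 G₁ → G₁ → Prop := fun a l c =>
  match l with
  | .inl b => c = a * b
  | .inr i => i = ULift.up 0 ∧ c = a

/-- left translations as automorphisms of the Cayley system -/
def cayHom : G₁ →* relAut (tern (M1 G₁)) where
  toFun g := ⟨Equiv.mulLeft g, by
    intro l a c
    cases l with
    | inl b => simp [tern, M1, mul_assoc]
    | inr i => simp [tern, M1]⟩
  map_one' := by apply Subtype.ext; apply Equiv.ext; intro x; simp
  map_mul' g h := by apply Subtype.ext; apply Equiv.ext; intro x; simp [mul_assoc]

lemma cayHom_bij : Function.Bijective (cayHom G₁) := by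
  constructor
  · intro g h hgh
    have := congrArg (fun σ : relAut (tern (M1 G₁)) => (σ : Equiv.Perm G₁) 1) hgh
    simpa [cayHom] using this
  · rintro ⟨σ, hσ⟩
    refine ⟨σ 1, ?_⟩
    apply Subtype.ext; apply Equiv.ext; intro x
    have h := (hσ (.inl x) 1 (1 * x)).1 (by simp [tern, M1])
    simp only [tern, M1] at h
    simp [cayHom, h.symm]

lemma hL3_L1 : ∀ b : L1 G₁, ∃ c₁ c₂ c₃ : L1 G₁,
    c₁ ≠ c₂ ∧ c₁ ≠ c₃ ∧ c₂ ≠ c₃ ∧ c₁ ≠ b ∧ c₂ ≠ b ∧ c₃ ≠ b := by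
  have hni : ∀ m k : ℕ, m ≠ k →
      (Sum.inr (ULift.up m) : L1 G₁) ≠ .inr (ULift.up k) := by
    intro m k h hc
    exact h (congrArg ULift.down (Sum.inr.inj hc))
  rintro (b | n)
  · exact ⟨.inr (ULift.up 0), .inr (ULift.up 1), .inr (ULift.up 2),
      hni 0 1 (by omega), hni 0 2 (by omega), hni 1 2 (by omega),
      by simp, by simp, by simp⟩
  · obtain ⟨m⟩ := n
    exact ⟨.inr (ULift.up (m+1)), .inr (ULift.up (m+2)), .inr (ULift.up (m+3)),
      hni _ _ (by omega), hni _ _ (by omega), hni _ _ (by omega),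
      hni _ _ (by omega), hni _ _ (by omega), hni _ _ (by omega)⟩

lemma hC1_M1 : ∀ a : G₁, ∃ t : Tri (M1 G₁), t.1.1 = a :=
  fun a => ⟨⟨(a, .inr (ULift.up 0), a), ⟨rfl, rfl⟩⟩, rfl⟩

end App1
end AR

namespace AR
section App2
variable (G₁ G₂ : Type u) [Group G₁] [Group G₂] (H : Subgroup (G₁ × G₂))

abbrev XQ : Type u := (G₁ × G₂) ⧸ H
abbrev V2 : Type u := G₂ ⊕ XQ G₁ G₂ H
abbrev L2 : Type u := L1 G₁ ⊕ G₂

/-- the relational system on `G₂ ⊕ (G₁ × G₂)/H`: the Cayley system of `G₂`, the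
"marking" relations from `G₂` into the coset space, the right-translation relations on the
coset space, and pad loops. -/
def M2 : V2 G₁ G₂ H → L2 G₁ G₂ → V2 G₁ G₂ H → Prop := fun v l w =>
  match l, v, w with
  | .inr b, .inl a, .inl c => c = a * b
  | .inl (.inl g), .inl a, .inr x => x = QuotientGroup.mk (g, a)
  | .inl (.inl g), .inr x, .inr x' =>
      ∃ p : G₁ × G₂, x = QuotientGroup.mk p ∧ x' = QuotientGroup.mk (g⁻¹ * p.1, p.2)
  | .inl (.inr i), v', w' => i = ULift.up 0 ∧ w' = v'
  | _, _, _ => False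

lemma smul_mk (q p : G₁ × G₂) :
    q • (QuotientGroup.mk p : XQ G₁ G₂ H) = QuotientGroup.mk (q * p) := rfl

/-- the action of `G₂` on the vertices of the second system -/
def act2 (k : G₂) : Equiv.Perm (V2 G₁ G₂ H) where
  toFun v := match v with
    | .inl a => .inl (k * a)
    | .inr x => .inr (((1, k) : G₁ × G₂) • x)
  invFun v := match v with
    | .inl a => .inl (k⁻¹ * a)
    | .inr x => .inr (((1, k⁻¹) : G₁ × G₂) • x)
  left_inv := by
    rintro (a | x) <;> simp [smul_smul, ← Prod.one_eq_mk]
  right_inv := by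
    rintro (a | x) <;> simp [smul_smul, ← Prod.one_eq_mk]

lemma act2_mem (k : G₂) : act2 G₁ G₂ H k ∈ relAut (tern (M2 G₁ G₂ H)) := by
  rintro ((g | i) | b) (a | x) (c | x')
  · -- T-label, main, main : False on both sides
    simp [tern, M2, act2]
  · -- T-label, main, coset
    simp only [tern, M2, act2, Equiv.coe_fn_mk]
    rw [show (QuotientGroup.mk (g, k * a) : XQ G₁ G₂ H) =
      ((1, k) : G₁ × G₂) • QuotientGroup.mk (g, a) by rw [smul_mk]; simp,
      smul_left_cancel_iff]
  · simp [tern, M2, act2]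
  · -- T-label, coset, coset : U-relation
    simp only [tern, M2, act2, Equiv.coe_fn_mk]
    constructor
    · rintro ⟨p, rfl, rfl⟩
      refine ⟨((1, k) : G₁ × G₂) * p, by rw [smul_mk], ?_⟩
      rw [smul_mk]
      congr 1
      simp
    · rintro ⟨p, h1, h2⟩
      have h1' : x = QuotientGroup.mk (((1, k) : G₁ × G₂)⁻¹ * p) := by
        have := congrArg (fun y => ((1, k) : G₁ × G₂)⁻¹ • y) h1
        simpa [smul_mk, smul_smul, ← Prod.one_eq_mk] using this
      have h2' : x' = QuotientGroup.mk (((1, k) : G₁ × G₂)⁻¹ * (g⁻¹ * p.1, p.2)) := by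
        have := congrArg (fun y => ((1, k) : G₁ × G₂)⁻¹ • y) h2
        simpa [smul_mk, smul_smul, ← Prod.one_eq_mk] using this
      refine ⟨((1, k) : G₁ × G₂)⁻¹ * p, h1', ?_⟩
      rw [h2']
      congr 1
      simp
  · -- pad label: mains
    simp only [tern, M2, act2, Equiv.coe_fn_mk, Sum.inl.injEq]
    constructor
    · rintro ⟨h, rfl⟩; exact ⟨h, rfl⟩
    · rintro ⟨h, h2⟩; exact ⟨h, mul_left_cancel h2⟩
  · simp [tern, M2, act2]
  · simp [tern, M2, act2]
  · -- pad label: cosets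
    simp only [tern, M2, act2, Equiv.coe_fn_mk, Sum.inr.injEq]
    constructor
    · rintro ⟨h, rfl⟩; exact ⟨h, rfl⟩
    · rintro ⟨h, h2⟩; exact ⟨h, MulAction.injective _ h2⟩
  · -- Cayley label
    simp only [tern, M2, act2, Equiv.coe_fn_mk, Sum.inl.injEq]
    constructor
    · rintro rfl; rw [mul_assoc]
    · intro h; exact mul_left_cancel (by rw [h, mul_assoc])
  · simp [tern, M2, act2]
  · simp [tern, M2, act2]
  · simp [tern, M2, act2]

/-- `G₂` as automorphisms of the second system -/
def act2Hom : G₂ →* relAut (tern (M2 G₁ G₂ H)) where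
  toFun k := ⟨act2 G₁ G₂ H k, act2_mem G₁ G₂ H k⟩
  map_one' := by
    apply Subtype.ext; apply Equiv.ext
    rintro (a | x) <;> simp [act2, ← Prod.one_eq_mk]
  map_mul' k₁ k₂ := by
    apply Subtype.ext; apply Equiv.ext
    rintro (a | x)
    · simp [act2, mul_assoc]
    · simp [act2, smul_smul]

lemma act2_bij : Function.Bijective (act2Hom G₁ G₂ H) := by
  constructor
  · intro k k' h
    have := congrArg (fun σ : relAut (tern (M2 G₁ G₂ H)) =>
      (σ : Equiv.Perm (V2 G₁ G₂ H)) (.inl 1)) h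
    simpa [act2Hom, act2] using this
  · rintro ⟨σ, hσ⟩
    have hpart : ∀ a : G₂, ∃ c : G₂, σ (.inl a) = .inl c := by
      intro a
      have h := (hσ (.inr 1) (.inl a) (.inl (a * 1))).1 (by simp [tern, M2])
      rcases hva : σ (.inl a) with c | x
      · exact ⟨c, rfl⟩
      · exfalso
        rw [hva] at h
        rcases hvb : σ (.inl (a * 1)) with c' | x' <;> rw [hvb] at h <;>
          simpa [tern, M2] using h
    choose f hf using hpart
    have hcay : ∀ a b : G₂, f (a * b) = f a * b := by
      intro a b
      have h := (hσ (.inr b) (.inl a) (.inl (a * b))).1 (by simp [tern, M2])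
      rw [hf a, hf (a * b)] at h
      simpa [tern, M2] using h
    have hfk : ∀ a : G₂, f a = f 1 * a := by
      intro a
      conv_lhs => rw [← one_mul a]
      exact hcay 1 a
    set k := f 1 with hk
    have hX : ∀ x : XQ G₁ G₂ H, σ (.inr x) = .inr (((1, k) : G₁ × G₂) • x) := by
      intro x
      obtain ⟨p, rfl⟩ : ∃ p : G₁ × G₂, QuotientGroup.mk p = x :=
        ⟨x.out, QuotientGroup.out_eq' x⟩
      have h := (hσ (.inl (.inl p.1)) (.inl p.2) (.inr (QuotientGroup.mk p))).1
        (by simp [tern, M2])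
      rw [hf p.2] at h
      rcases hvx : σ (.inr (QuotientGroup.mk p)) with c | x'
      · exfalso
        rw [hvx] at h
        simpa [tern, M2] using h
      · rw [hvx] at h
        have h' : x' = QuotientGroup.mk (p.1, f p.2) := by simpa [tern, M2] using h
        rw [h', hfk p.2, smul_mk]
        have hp : ((1, k) : G₁ × G₂) * p = (p.1, k * p.2) := Prod.ext (by simp) (by simp)
        rw [hp]
    refine ⟨k, ?_⟩
    apply Subtype.ext; apply Equiv.ext
    rintro (a | x)
    · rw [show ((act2Hom G₁ G₂ H k : relAut (tern (M2 G₁ G₂ H))) :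
        Equiv.Perm (V2 G₁ G₂ H)) (.inl a) = .inl (k * a) from rfl, hf a, hfk a]
    · rw [show ((act2Hom G₁ G₂ H k : relAut (tern (M2 G₁ G₂ H))) :
        Equiv.Perm (V2 G₁ G₂ H)) (.inr x) = .inr (((1, k) : G₁ × G₂) • x) from rfl, hX x]

lemma hC1_M2 : ∀ v : V2 G₁ G₂ H, ∃ t : Tri (M2 G₁ G₂ H), t.1.1 = v :=
  fun v => ⟨⟨(v, .inl (.inr (ULift.up 0)), v), ⟨rfl, rfl⟩⟩, rfl⟩

lemma hL3_L2 : ∀ b : L2 G₁ G₂, ∃ c₁ c₂ c₃ : L2 G₁ G₂,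
    c₁ ≠ c₂ ∧ c₁ ≠ c₃ ∧ c₂ ≠ c₃ ∧ c₁ ≠ b ∧ c₂ ≠ b ∧ c₃ ≠ b := by
  rintro (b | b)
  · obtain ⟨c₁, c₂, c₃, h12, h13, h23, h1, h2, h3⟩ := hL3_L1 G₁ b
    exact ⟨.inl c₁, .inl c₂, .inl c₃,
      by simpa using h12, by simpa using h13, by simpa using h23,
      by simpa using h1, by simpa using h2, by simpa using h3⟩
  · refine ⟨.inl (.inr (ULift.up 0)), .inl (.inr (ULift.up 1)), .inl (.inr (ULift.up 2)),
      ?_, ?_, ?_, by simp, by simp, by simp⟩ <;>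
      (intro h; have h2 := congrArg ULift.down (Sum.inr.inj (Sum.inl.inj h)); simp at h2)

end App2
end AR

namespace AR
section Sys
variable {V L : Type u} (lt : L → L → Prop) (M : V → L → V → Prop)

/-- the composite lift from ternary-system automorphisms to graph automorphisms -/
def sysLift : relAut (tern M) →* graphAut (Gr (DA lt M)) :=
  (lift (DA lt M)).comp (dlift lt M)

variable [IsWellOrder L lt] (hV : Nonempty V) (hLne : Nonempty L)
  (hL3 : ∀ b : L, ∃ c₁ c₂ c₃ : L,
    c₁ ≠ c₂ ∧ c₁ ≠ c₃ ∧ c₂ ≠ c₃ ∧ c₁ ≠ b ∧ c₂ ≠ b ∧ c₃ ≠ b)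
  (hC1 : ∀ a : V, ∃ t : Tri M, t.1.1 = a)
include hV hLne hL3 hC1

lemma sysLift_bij : Function.Bijective (sysLift lt M) := by
  rw [sysLift, MonoidHom.coe_comp]
  refine Function.Bijective.comp ⟨lift_inj, ?_⟩ ⟨dlift_inj lt M, dlift_surj hV hLne hL3 hC1⟩
  rintro ⟨e, he⟩
  exact lift_surj' he (da_hdeg hV hLne hL3 hC1)

omit hC1 hL3 in
lemma sys_connected : (Gr (DA lt M)).Connected :=
  gr_connected ⟨.inl hV.some⟩ (da_conn hV hLne)

end Sys

section Arrow
variable (G₁ G₂ : Type u) [Group G₁] [Group G₂] (H : Subgroup (G₁ × G₂))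

def lt1 : L1 G₁ → L1 G₁ → Prop := WellOrderingRel

noncomputable instance : IsWellOrder (L1 G₁) (lt1 G₁) := WellOrderingRel.isWellOrder

def lt2 : L2 G₁ G₂ → L2 G₁ G₂ → Prop := Sum.Lex (lt1 G₁) WellOrderingRel

noncomputable instance : IsWellOrder (L2 G₁ G₂) (lt2 G₁ G₂) :=
  inferInstanceAs (IsWellOrder _ (Sum.Lex (lt1 G₁) WellOrderingRel))

/-- vertex part of the morphism between the two systems -/
def psiV : G₁ → V2 G₁ G₂ H := fun a => .inr (QuotientGroup.mk (a⁻¹, 1))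

/-- triple part of the morphism -/
def psiT : Tri (M1 G₁) → Tri (M2 G₁ G₂ H) := fun t =>
  ⟨(psiV G₁ G₂ H t.1.1, .inl t.1.2.1, psiV G₁ G₂ H t.1.2.2), by
    obtain ⟨⟨a, l, c⟩, hM⟩ := t
    dsimp only at hM ⊢
    rcases l with b | i
    · have hc : c = a * b := hM
      subst hc
      exact ⟨(a⁻¹, 1), rfl, by simp [psiV, mul_inv_rev]⟩
    · obtain ⟨hi, hc⟩ := hM
      subst hc
      exact ⟨hi, rfl⟩⟩

/-- the digraph morphism between the two systems -/
def psiW : DW (M1 G₁) → DW (M2 G₁ G₂ H)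
  | .inl a => .inl (psiV G₁ G₂ H a)
  | .inr (.inl b) => .inr (.inl (.inl b))
  | .inr (.inr (t, s)) => .inr (.inr (psiT G₁ G₂ H t, s))

lemma psiW_hom : ∀ u v, DA (lt1 G₁) (M1 G₁) u v →
    DA (lt2 G₁ G₂) (M2 G₁ G₂ H) (psiW G₁ G₂ H u) (psiW G₁ G₂ H v) := by
  intro u v h
  cases h with
  | ap t => exact DA.ap (psiT G₁ G₂ H t)
  | bp t => exact DA.bp (psiT G₁ G₂ H t)
  | pb t => exact DA.pb (psiT G₁ G₂ H t)
  | pq t => exact DA.pq (psiT G₁ G₂ H t)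
  | qc t => exact DA.qc (psiT G₁ G₂ H t)
  | qb t => exact DA.qb (psiT G₁ G₂ H t)
  | al a b => exact DA.al (psiV G₁ G₂ H a) (Sum.inl b : L2 G₁ G₂)
  | ll b b' h => exact DA.ll _ _ (Sum.Lex.inl h)

/-- the graph homomorphism -/
def phi : Gr (DA (lt1 G₁) (M1 G₁)) →g Gr (DA (lt2 G₁ G₂) (M2 G₁ G₂ H)) :=
  liftHom (psiW G₁ G₂ H) (psiW_hom G₁ G₂ H)

/-- `G₁` as graph automorphisms of the first graph -/
noncomputable def E1 : G₁ →* graphAut (Gr (DA (lt1 G₁) (M1 G₁))) :=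
  (sysLift (lt1 G₁) (M1 G₁)).comp (cayHom G₁)

/-- `G₂` as graph automorphisms of the second graph -/
noncomputable def E2 : G₂ →* graphAut (Gr (DA (lt2 G₁ G₂) (M2 G₁ G₂ H))) :=
  (sysLift (lt2 G₁ G₂) (M2 G₁ G₂ H)).comp (act2Hom G₁ G₂ H)

lemma E1_bij : Function.Bijective (E1 G₁) := by
  rw [E1, MonoidHom.coe_comp]
  exact Function.Bijective.comp
    (sysLift_bij _ _ ⟨1⟩ ⟨.inr (ULift.up 0)⟩ (hL3_L1 G₁) (hC1_M1 G₁)) (cayHom_bij G₁)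

lemma E2_bij : Function.Bijective (E2 G₁ G₂ H) := by
  rw [E2, MonoidHom.coe_comp]
  exact Function.Bijective.comp
    (sysLift_bij _ _ ⟨.inl 1⟩ ⟨.inr 1⟩ (hL3_L2 G₁ G₂) (hC1_M2 G₁ G₂ H)) (act2_bij G₁ G₂ H)

lemma key_main {g : G₁} {k : G₂} (hgk : (g, k) ∈ H) (a : G₁) :
    (QuotientGroup.mk ((g * a)⁻¹, 1) : XQ G₁ G₂ H) =
      ((1, k) : G₁ × G₂) • QuotientGroup.mk (a⁻¹, 1) := by
  rw [smul_mk, QuotientGroup.eq]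
  have : ((g * a)⁻¹, (1 : G₂))⁻¹ * (((1, k) : G₁ × G₂) * (a⁻¹, 1)) = (g, k) :=
    Prod.ext (by simp [mul_assoc]) (by simp)
  rw [this]
  exact hgk

lemma key_psiV {g : G₁} {k : G₂} (hgk : (g, k) ∈ H) (a : G₁) :
    psiV G₁ G₂ H (g * a) = act2 G₁ G₂ H k (psiV G₁ G₂ H a) := by
  rw [show act2 G₁ G₂ H k (psiV G₁ G₂ H a) =
    .inr (((1, k) : G₁ × G₂) • QuotientGroup.mk (a⁻¹, 1)) from rfl, psiV,
    key_main G₁ G₂ H hgk a]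

lemma comm_W {g : G₁} {k : G₂} (hgk : (g, k) ∈ H) (w : DW (M1 G₁)) :
    psiW G₁ G₂ H (dwMap (cayHom G₁ g).1 (cayHom G₁ g).2 w) =
      dwMap (act2Hom G₁ G₂ H k).1 (act2Hom G₁ G₂ H k).2 (psiW G₁ G₂ H w) := by
  rcases w with a | b | ⟨t, s⟩
  · exact congrArg Sum.inl (key_psiV G₁ G₂ H hgk a)
  · rfl
  · have ht : psiT G₁ G₂ H (triMap (cayHom G₁ g).1 (cayHom G₁ g).2 t) =
        triMap (act2Hom G₁ G₂ H k).1 (act2Hom G₁ G₂ H k).2 (psiT G₁ G₂ H t) := by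
      apply Subtype.ext
      exact Prod.ext (key_psiV G₁ G₂ H hgk t.1.1)
        (Prod.ext rfl (key_psiV G₁ G₂ H hgk t.1.2.2))
    exact congrArg (fun x => Sum.inr (Sum.inr (x, s))) ht

end Arrow
end AR

namespace AR
section Final
variable (G₁ G₂ : Type u) [Group G₁] [Group G₂] (H : Subgroup (G₁ × G₂))

lemma comm_Omega {g : G₁} {k : G₂} (hgk : (g, k) ∈ H)
    (v : Omega (DA (lt1 G₁) (M1 G₁))) :
    (phi G₁ G₂ H) (((E1 G₁ g : graphAut (Gr (DA (lt1 G₁) (M1 G₁)))) :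
        Equiv.Perm (Omega (DA (lt1 G₁) (M1 G₁)))) v) =
      ((E2 G₁ G₂ H k : graphAut (Gr (DA (lt2 G₁ G₂) (M2 G₁ G₂ H)))) :
        Equiv.Perm (Omega (DA (lt2 G₁ G₂) (M2 G₁ G₂ H)))) ((phi G₁ G₂ H) v) := by
  rcases v with w | ⟨⟨⟨u₁, u₂⟩, ha⟩, t⟩
  · exact congrArg Sum.inl (comm_W G₁ G₂ H hgk w)
  · exact congrArg Sum.inr (Prod.ext (Subtype.ext
      (Prod.ext (comm_W G₁ G₂ H hgk u₁) (comm_W G₁ G₂ H hgk u₂))) rfl)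

/-- `H` as the automorphism group of the arrow `phi` -/
noncomputable def Phi : H →*
    graphArrowAut (Gr (DA (lt1 G₁) (M1 G₁))) (Gr (DA (lt2 G₁ G₂) (M2 G₁ G₂ H)))
      ⇑(phi G₁ G₂ H) where
  toFun h := ⟨(E1 G₁ h.1.1, E2 G₁ G₂ H h.1.2),
    fun v => comm_Omega G₁ G₂ H (show (h.1.1, h.1.2) ∈ H by rw [Prod.mk.eta]; exact h.2) v⟩
  map_one' := Subtype.ext (Prod.ext (map_one (E1 G₁)) (map_one (E2 G₁ G₂ H)))
  map_mul' h h' := Subtype.ext (Prod.ext (map_mul (E1 G₁) _ _) (map_mul (E2 G₁ G₂ H) _ _))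

lemma Phi_bij : Function.Bijective (Phi G₁ G₂ H) := by
  constructor
  · intro h h' heq
    have h0 := congrArg Subtype.val heq
    have h1 : E1 G₁ h.1.1 = E1 G₁ h'.1.1 := congrArg Prod.fst h0
    have h2 : E2 G₁ G₂ H h.1.2 = E2 G₁ G₂ H h'.1.2 := congrArg Prod.snd h0
    exact Subtype.ext (Prod.ext ((E1_bij G₁).1 h1) ((E2_bij G₁ G₂ H).1 h2))
  · rintro ⟨⟨e₁, e₂⟩, hcomm⟩
    obtain ⟨g, hg⟩ := (E1_bij G₁).2 e₁
    obtain ⟨k, hk⟩ := (E2_bij G₁ G₂ H).2 e₂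
    have h := hcomm (.inl (.inl (1 : G₁)))
    rw [← hg, ← hk] at h
    have key : (QuotientGroup.mk ((g * 1)⁻¹, 1) : XQ G₁ G₂ H) =
        ((1, k) : G₁ × G₂) • QuotientGroup.mk ((1 : G₁)⁻¹, 1) :=
      Sum.inr.inj (Sum.inl.inj (Sum.inl.inj h))
    rw [smul_mk, QuotientGroup.eq] at key
    have hcal : ((g * 1)⁻¹, (1 : G₂))⁻¹ * (((1, k) : G₁ × G₂) * ((1 : G₁)⁻¹, 1)) = (g, k) :=
      Prod.ext (by simp) (by simp)
    rw [hcal] at key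
    exact ⟨⟨(g, k), key⟩, Subtype.ext (Prod.ext hg hk)⟩

end Final
end AR


universe u

/-- **Realisability in the arrow category of graphs.**
For arbitrary groups `G₁`, `G₂` and any subgroup `H ≤ G₁ × G₂`, there exist connected simple
graphs `Γ₁`, `Γ₂` and a graph homomorphism `φ : Γ₁ → Γ₂` with `Aut(Γ₁) ≅ G₁`,
`Aut(Γ₂) ≅ G₂` and `Aut(φ) ≅ H`. -/
theorem arrow_realisability_in_graphs (G₁ G₂ : Type u) [Group G₁] [Group G₂]
    (H : Subgroup (G₁ × G₂)) :
    ∃ (V₁ V₂ : Type u) (Γ₁ : SimpleGraph V₁) (Γ₂ : SimpleGraph V₂) (φ : Γ₁ →g Γ₂),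
      Γ₁.Connected ∧ Γ₂.Connected ∧
      Nonempty (graphAut Γ₁ ≃* G₁) ∧ Nonempty (graphAut Γ₂ ≃* G₂) ∧
      Nonempty (graphArrowAut Γ₁ Γ₂ ⇑φ ≃* H) := by
  refine ⟨_, _, _, _, AR.phi G₁ G₂ H, ?_, ?_, ?_, ?_, ?_⟩
  · exact AR.sys_connected _ _ ⟨1⟩ ⟨.inr (ULift.up 0)⟩
  · exact AR.sys_connected _ _ ⟨.inl 1⟩ ⟨.inr 1⟩
  · exact ⟨(MulEquiv.ofBijective (AR.E1 G₁) (AR.E1_bij G₁)).symm⟩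
  · exact ⟨(MulEquiv.ofBijective (AR.E2 G₁ G₂ H) (AR.E2_bij G₁ G₂ H)).symm⟩
  · exact ⟨(MulEquiv.ofBijective (AR.Phi G₁ G₂ H) (AR.Phi_bij G₁ G₂ H)).symm⟩
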